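/- Every finite bipartite simple graph G without isolated vertices satisfies χ'_sCF(G) ≤ 3. -/

import Mathlib

open SimpleGraph

/-- An edge `e` is *satisfied* by the colouring `c` of (the edges of) the graph `H` if some
colour is assigned by `c` to exactly one edge of `H` incident to an endpoint of `e`. -/
def CFSatisfies {V : Type*} {k : ℕ} (H : SimpleGraph V) (c : Sym2 V → Fin k) (e : Sym2 V) :
    Prop :=
  ∃ col : Fin k, ∃! f : Sym2 V, f ∈ H.edgeSet ∧ (∃ x ∈ e, x ∈ f) ∧ c f = col

/-- The conflict-free chromatic index `χ'_CF(G)`: the least `k` such that `G` admits an edge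
colouring with `k` colours in which every edge of `G` is satisfied. -/
noncomputable def cfChromIndex {V : Type*} (G : SimpleGraph V) : ℕ :=
  sInf {k | ∃ c : Sym2 V → Fin k, ∀ e ∈ G.edgeSet, CFSatisfies G c e}

/-- The parameter `χ'_sCF(G)`: the least `k` for which some subgraph `H` of `G` admits an edge
colouring with `k` colours such that every edge of `G` is satisfied. -/
noncomputable def scfChromIndex {V : Type*} (G : SimpleGraph V) : ℕ :=
  sInf {k | ∃ H : SimpleGraph V, H ≤ G ∧
    ∃ c : Sym2 V → Fin k, ∀ e ∈ G.edgeSet, CFSatisfies H c e}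


section Aux
variable {V : Type*} [Fintype V]

open scoped Classical

/-- The star at `a`: the set of `b` on side 1 assigned to `a` by `m`. -/
noncomputable def cfStar (φ : V → Fin 2) (m : V → V) (a : V) : Finset V :=
  Finset.univ.filter (fun b => φ b = 1 ∧ m b = a)

noncomputable def cfRk [LinearOrder V] (φ : V → Fin 2) (m : V → V) (b : V) : ℕ :=
  ((cfStar φ m (m b)).filter (fun x => x < b)).card

noncomputable def cfCol [LinearOrder V] (φ : V → Fin 2) (m : V → V) (b : V) : Fin 3 :=
  if (cfStar φ m (m b)).card ≤ 1 then 2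
  else if cfRk φ m b = 0 then 0
  else if cfRk φ m b = 1 then 1 else 2

noncomputable def cfNsing (φ : V → Fin 2) (m : V → V) : ℕ :=
  (Finset.univ.filter (fun a => (cfStar φ m a).card = 1)).card

lemma mem_cfStar {φ : V → Fin 2} {m : V → V} {a b : V} :
    b ∈ cfStar φ m a ↔ φ b = 1 ∧ m b = a := by simp [cfStar]

variable [LinearOrder V] {φ : V → Fin 2} {m : V → V} {a b b' : V}

lemma cfRk_lt (hb : b ∈ cfStar φ m a) : cfRk φ m b < (cfStar φ m a).card := by
  have hmb : m b = a := (mem_cfStar.1 hb).2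
  rw [cfRk, hmb]
  apply Finset.card_lt_card
  refine ⟨Finset.filter_subset _ _, fun h => ?_⟩
  have := h hb
  simp at this

lemma cfRk_inj (hb : b ∈ cfStar φ m a) (hb' : b' ∈ cfStar φ m a)
    (h : cfRk φ m b = cfRk φ m b') : b = b' := by
  have hmb : m b = a := (mem_cfStar.1 hb).2
  have hmb' : m b' = a := (mem_cfStar.1 hb').2
  rw [cfRk, cfRk, hmb, hmb'] at h
  by_contra hne
  rcases lt_or_gt_of_ne hne with hlt | hlt
  · have hss : (cfStar φ m a).filter (fun x => x < b) ⊂ (cfStar φ m a).filter (fun x => x < b') := by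
      refine ⟨fun x hx => ?_, fun hsub => ?_⟩
      · rcases Finset.mem_filter.1 hx with ⟨h1, h2⟩
        exact Finset.mem_filter.2 ⟨h1, lt_trans h2 hlt⟩
      have := hsub (Finset.mem_filter.2 ⟨hb, hlt⟩)
      simp at this
    exact absurd h (Nat.ne_of_lt (Finset.card_lt_card hss))
  · have hss : (cfStar φ m a).filter (fun x => x < b') ⊂ (cfStar φ m a).filter (fun x => x < b) := by
      refine ⟨fun x hx => ?_, fun hsub => ?_⟩
      · rcases Finset.mem_filter.1 hx with ⟨h1, h2⟩
        exact Finset.mem_filter.2 ⟨h1, lt_trans h2 hlt⟩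
      have := hsub (Finset.mem_filter.2 ⟨hb', hlt⟩)
      simp at this
    exact absurd h.symm (Nat.ne_of_lt (Finset.card_lt_card hss))

lemma cfRk_exists_zero (h : (cfStar φ m a).Nonempty) :
    ∃ b ∈ cfStar φ m a, cfRk φ m b = 0 := by
  refine ⟨(cfStar φ m a).min' h, Finset.min'_mem _ h, ?_⟩
  have hmb : m ((cfStar φ m a).min' h) = a := (mem_cfStar.1 (Finset.min'_mem _ h)).2
  rw [cfRk, hmb, Finset.card_eq_zero, Finset.filter_eq_empty_iff]
  intro x hx
  simp only [not_lt]
  exact Finset.min'_le _ _ hx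

lemma cfRk_exists_one (h : 2 ≤ (cfStar φ m a).card) :
    ∃ b ∈ cfStar φ m a, cfRk φ m b = 1 := by
  have hne : (cfStar φ m a).Nonempty := Finset.card_pos.1 (by omega)
  set b0 := (cfStar φ m a).min' hne with hb0
  have hne' : ((cfStar φ m a).erase b0).Nonempty := by
    rw [← Finset.card_pos, Finset.card_erase_of_mem (Finset.min'_mem _ hne)]
    omega
  set b1 := ((cfStar φ m a).erase b0).min' hne' with hb1
  have hb1mem : b1 ∈ (cfStar φ m a).erase b0 := Finset.min'_mem _ hne'
  have hb1mem' : b1 ∈ cfStar φ m a := Finset.mem_of_mem_erase hb1mem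
  have hb0lt : b0 < b1 := by
    have hle := Finset.min'_le _ _ hb1mem'
    have hne2 : b1 ≠ b0 := Finset.ne_of_mem_erase hb1mem
    exact lt_of_le_of_ne hle (Ne.symm hne2)
  refine ⟨b1, hb1mem', ?_⟩
  have hmb : m b1 = a := (mem_cfStar.1 hb1mem').2
  rw [cfRk, hmb]
  have : (cfStar φ m a).filter (fun x => x < b1) = {b0} := by
    apply Finset.eq_singleton_iff_unique_mem.2
    constructor
    · exact Finset.mem_filter.2 ⟨Finset.min'_mem _ hne, hb0lt⟩
    · intro x hx
      rcases Finset.mem_filter.1 hx with ⟨hxm, hxlt⟩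
      by_contra hxb0
      have : x ∈ (cfStar φ m a).erase b0 := Finset.mem_erase.2 ⟨hxb0, hxm⟩
      exact absurd hxlt (not_lt.2 (Finset.min'_le _ _ this))
  rw [this, Finset.card_singleton]

lemma cfCol_eq_two (hb : b ∈ cfStar φ m a) (h : (cfStar φ m a).card ≤ 1) :
    cfCol φ m b = 2 := by
  have hmb : m b = a := (mem_cfStar.1 hb).2
  rw [cfCol, hmb, if_pos h]

lemma cfCol_zero_iff (hb : b ∈ cfStar φ m a) (h : 2 ≤ (cfStar φ m a).card) :
    cfCol φ m b = 0 ↔ cfRk φ m b = 0 := by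
  have hmb : m b = a := (mem_cfStar.1 hb).2
  rw [cfCol, hmb, if_neg (by omega)]
  split_ifs with h0 h1 <;> simp_all

lemma cfCol_one_iff (hb : b ∈ cfStar φ m a) (h : 2 ≤ (cfStar φ m a).card) :
    cfCol φ m b = 1 ↔ cfRk φ m b = 1 := by
  have hmb : m b = a := (mem_cfStar.1 hb).2
  rw [cfCol, hmb, if_neg (by omega)]
  split_ifs with h0 h1 <;> simp_all

end Aux
section Aux2
variable {V : Type*} [Fintype V] {G : SimpleGraph V} {φ : V → Fin 2} {m : V → V} {u v : V}

open scoped Classical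

lemma mem_cfStar_update (hv : φ v = 1) {a b : V} :
    b ∈ cfStar φ (Function.update m v u) a ↔
      (b ≠ v ∧ b ∈ cfStar φ m a) ∨ (b = v ∧ a = u) := by
  by_cases hbv : b = v
  · subst hbv
    simp [mem_cfStar, Function.update_self, hv, eq_comm]
  · simp [mem_cfStar, Function.update_of_ne hbv, hbv]

lemma cf_min_key (hval : ∀ x, G.Adj x (m x))
    (hmin : ∀ m' : V → V, (∀ x, G.Adj x (m' x)) → cfNsing φ m ≤ cfNsing φ m')
    (huv : G.Adj u v) (hu : φ u = 0) (hv : φ v = 1) (hmv : m v ≠ u)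
    (hs : (cfStar φ m u).card = 1) : (cfStar φ m (m v)).card = 2 := by
  by_contra ht
  set m' := Function.update m v u with hm'
  have hval' : ∀ x, G.Adj x (m' x) := by
    intro x
    by_cases hx : x = v
    · subst hx; rw [hm', Function.update_self]; exact huv.symm
    · rw [hm', Function.update_of_ne hx]; exact hval x
  have hvmem : v ∈ cfStar φ m (m v) := mem_cfStar.2 ⟨hv, rfl⟩
  have ht1 : 1 ≤ (cfStar φ m (m v)).card := Finset.card_pos.2 ⟨v, hvmem⟩
  have hvnotu : v ∉ cfStar φ m u := fun h => hmv (mem_cfStar.1 h).2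
  -- star of m' at u
  have hSu : cfStar φ m' u = insert v (cfStar φ m u) := by
    ext b
    rw [mem_cfStar_update hv, Finset.mem_insert]
    constructor
    · rintro (⟨_, h⟩ | ⟨h, _⟩)
      · exact Or.inr h
      · exact Or.inl h
    · rintro (h | h)
      · exact Or.inr ⟨h, rfl⟩
      · rcases eq_or_ne b v with hbv | hbv
        · exact Or.inr ⟨hbv, rfl⟩
        · exact Or.inl ⟨hbv, h⟩
  have hSucard : (cfStar φ m' u).card = 2 := by
    rw [hSu, Finset.card_insert_of_notMem hvnotu, hs]
  -- star of m' at m v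
  have hSmv : cfStar φ m' (m v) = (cfStar φ m (m v)).erase v := by
    ext b
    rw [mem_cfStar_update hv, Finset.mem_erase]
    constructor
    · rintro (⟨h1, h2⟩ | ⟨h1, h2⟩)
      · exact ⟨h1, h2⟩
      · exact absurd h2 hmv
    · rintro ⟨h1, h2⟩
      exact Or.inl ⟨h1, h2⟩
  have hSmvcard : (cfStar φ m' (m v)).card = (cfStar φ m (m v)).card - 1 := by
    rw [hSmv, Finset.card_erase_of_mem hvmem]
  -- other stars
  have hSother : ∀ a, a ≠ u → a ≠ m v → cfStar φ m' a = cfStar φ m a := by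
    intro a hau hamv
    ext b
    rw [mem_cfStar_update hv]
    constructor
    · rintro (⟨_, h⟩ | ⟨_, h⟩)
      · exact h
      · exact absurd h hau
    · intro h
      rcases eq_or_ne b v with hbv | hbv
      · subst hbv
        exact absurd (mem_cfStar.1 h).2.symm hamv
      · exact Or.inl ⟨hbv, h⟩
  -- strict decrease
  have hss : (Finset.univ.filter (fun a => (cfStar φ m' a).card = 1)) ⊂
      (Finset.univ.filter (fun a => (cfStar φ m a).card = 1)) := by
    constructor
    · intro a ha
      rcases Finset.mem_filter.1 ha with ⟨-, ha⟩
      refine Finset.mem_filter.2 ⟨Finset.mem_univ _, ?_⟩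
      rcases eq_or_ne a u with rfl | hau
      · rw [hSucard] at ha; omega
      rcases eq_or_ne a (m v) with rfl | hamv
      · rw [hSmvcard] at ha; omega
      · rwa [hSother a hau hamv] at ha
    · intro hsub
      have hu' := hsub (Finset.mem_filter.2 ⟨Finset.mem_univ u, hs⟩)
      rcases Finset.mem_filter.1 hu' with ⟨-, hu'⟩
      rw [hSucard] at hu'
      omega
  have := hmin m' hval'
  rw [cfNsing, cfNsing] at this
  exact absurd this (not_le.2 (Finset.card_lt_card hss))

end Aux2
section Aux3
variable {V : Type*} [Fintype V] [LinearOrder V] {G : SimpleGraph V}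
  {φ : V → Fin 2} {m : V → V} {u v : V}

open scoped Classical

lemma cf_core (hval : ∀ x, G.Adj x (m x))
    (hmin : ∀ m' : V → V, (∀ x, G.Adj x (m' x)) → cfNsing φ m ≤ cfNsing φ m')
    (huv : G.Adj u v) (hu : φ u = 0) (hv : φ v = 1) :
    ∃ col0 : Fin 3, ∃! b : V, (φ b = 1 ∧ (m b = u ∨ b = v)) ∧ cfCol φ m b = col0 := by
  by_cases hmvu : m v = u
  · -- v belongs to the star at u
    have hP : ∀ b, (φ b = 1 ∧ (m b = u ∨ b = v)) ↔ b ∈ cfStar φ m u := by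
      intro b
      rw [mem_cfStar]
      constructor
      · rintro ⟨h1, h2 | rfl⟩
        · exact ⟨h1, h2⟩
        · exact ⟨h1, hmvu⟩
      · rintro ⟨h1, h2⟩
        exact ⟨h1, Or.inl h2⟩
    have hvmem : v ∈ cfStar φ m u := mem_cfStar.2 ⟨hv, hmvu⟩
    rcases le_or_gt (cfStar φ m u).card 1 with hs | hs
    · refine ⟨cfCol φ m v, v, ⟨(hP v).2 hvmem, rfl⟩, ?_⟩
      rintro b' ⟨hb', -⟩
      have hb'mem := (hP b').1 hb'
      have h1 : (cfStar φ m u).card = 1 := le_antisymm hs (Finset.card_pos.2 ⟨v, hvmem⟩)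
      rcases Finset.card_eq_one.1 h1 with ⟨x, hx⟩
      rw [hx, Finset.mem_singleton] at hb'mem hvmem
      rw [hb'mem, hvmem]
    · have hs' : 2 ≤ (cfStar φ m u).card := hs
      obtain ⟨b0, hb0, hrk0⟩ := cfRk_exists_zero (a := u) (Finset.card_pos.1 (Nat.zero_lt_of_lt hs))
      refine ⟨0, b0, ⟨(hP b0).2 hb0, (cfCol_zero_iff hb0 hs').2 hrk0⟩, ?_⟩
      rintro b' ⟨hb', hcol'⟩
      have hb'mem := (hP b').1 hb'
      exact cfRk_inj hb'mem hb0 (((cfCol_zero_iff hb'mem hs').1 hcol').trans hrk0.symm)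
  · -- v is not in the star at u
    have hvnot : v ∉ cfStar φ m u := fun h => hmvu (mem_cfStar.1 h).2
    have hP : ∀ b, (φ b = 1 ∧ (m b = u ∨ b = v)) ↔ (b ∈ cfStar φ m u ∨ b = v) := by
      intro b
      rw [mem_cfStar]
      constructor
      · rintro ⟨h1, h2 | rfl⟩
        · exact Or.inl ⟨h1, h2⟩
        · exact Or.inr rfl
      · rintro (⟨h1, h2⟩ | rfl)
        · exact ⟨h1, Or.inl h2⟩
        · exact ⟨hv, Or.inr rfl⟩
    rcases Nat.lt_or_ge (cfStar φ m u).card 2 with hs | hs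
    · rcases Nat.eq_zero_or_pos (cfStar φ m u).card with hs0 | hs0
      · -- empty star: only v
        refine ⟨cfCol φ m v, v, ⟨(hP v).2 (Or.inr rfl), rfl⟩, ?_⟩
        rintro b' ⟨hb', -⟩
        rcases (hP b').1 hb' with hmem | rfl
        · exact absurd hmem (by simp [Finset.card_eq_zero.1 hs0])
        · rfl
      · -- singleton star: use the minimality of m
        have hs1 : (cfStar φ m u).card = 1 := by omega
        have h2 : (cfStar φ m (m v)).card = 2 := cf_min_key hval hmin huv hu hv hmvu hs1
        have hvmemv : v ∈ cfStar φ m (m v) := mem_cfStar.2 ⟨hv, rfl⟩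
        have hrklt : cfRk φ m v < 2 := h2 ▸ cfRk_lt hvmemv
        have hcvne2 : cfCol φ m v ≠ 2 := by
          rw [cfCol, if_neg (by omega)]
          split_ifs with h0 h1
          · decide
          · decide
          · omega
        obtain ⟨x, hx⟩ := Finset.card_eq_one.1 hs1
        have hcolx : cfCol φ m x = 2 :=
          cfCol_eq_two (a := u) (by rw [hx]; exact Finset.mem_singleton_self x) (by omega)
        refine ⟨cfCol φ m v, v, ⟨(hP v).2 (Or.inr rfl), rfl⟩, ?_⟩
        rintro b' ⟨hb', hcol'⟩
        rcases (hP b').1 hb' with hmem | rfl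
        · rw [hx, Finset.mem_singleton] at hmem
          subst hmem
          rw [hcolx] at hcol'
          exact absurd hcol'.symm hcvne2
        · rfl
    · -- big star
      obtain ⟨b0, hb0, hrk0⟩ := cfRk_exists_zero (a := u) (Finset.card_pos.1 (lt_of_lt_of_le (by norm_num) hs))
      by_cases hcv : cfCol φ m v = 0
      · obtain ⟨b1, hb1, hrk1⟩ := cfRk_exists_one hs
        refine ⟨1, b1, ⟨(hP b1).2 (Or.inl hb1), (cfCol_one_iff hb1 hs).2 hrk1⟩, ?_⟩
        rintro b' ⟨hb', hcol'⟩
        rcases (hP b').1 hb' with hmem | rfl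
        · exact cfRk_inj hmem hb1 (((cfCol_one_iff hmem hs).1 hcol').trans hrk1.symm)
        · rw [hcv] at hcol'; exact absurd hcol' (by decide)
      · refine ⟨0, b0, ⟨(hP b0).2 (Or.inl hb0), (cfCol_zero_iff hb0 hs).2 hrk0⟩, ?_⟩
        rintro b' ⟨hb', hcol'⟩
        rcases (hP b').1 hb' with hmem | rfl
        · exact cfRk_inj hmem hb0 (((cfCol_zero_iff hmem hs).1 hcol').trans hrk0.symm)
        · exact absurd hcol' hcv

end Aux3
section Aux4
variable {V : Type*} [Fintype V]

open scoped Classical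

def cfH (φ : V → Fin 2) (m : V → V) : SimpleGraph V where
  Adj x y := (φ x = 1 ∧ φ y = 0 ∧ m x = y) ∨ (φ y = 1 ∧ φ x = 0 ∧ m y = x)
  symm := ⟨by intro x y h; tauto⟩
  loopless := ⟨by
    intro x h
    rcases h with ⟨h1, h2, -⟩ | ⟨h1, h2, -⟩ <;> (rw [h1] at h2; exact absurd h2 (by decide))⟩

noncomputable def cfC [LinearOrder V] (φ : V → Fin 2) (m : V → V) : Sym2 V → Fin 3 :=
  Sym2.lift ⟨fun x y =>
    if φ x = 1 ∧ φ y = 0 then cfCol φ m x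
    else if φ y = 1 ∧ φ x = 0 then cfCol φ m y else 0, by
    intro x y
    dsimp only
    split_ifs <;> simp_all⟩

lemma cfC_edge [LinearOrder V] {φ : V → Fin 2} {m : V → V} {b : V}
    (hb : φ b = 1) (hmb : φ (m b) = 0) : cfC φ m s(b, m b) = cfCol φ m b := by
  simp [cfC, hb, hmb]

lemma cf_bridge [LinearOrder V] {G : SimpleGraph V} {φ : V → Fin 2} {m : V → V} {u v : V}
    (hval : ∀ x, G.Adj x (m x))
    (hmin : ∀ m' : V → V, (∀ x, G.Adj x (m' x)) → cfNsing φ m ≤ cfNsing φ m')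
    (hφ : ∀ x y, G.Adj x y → φ x ≠ φ y)
    (huv : G.Adj u v) (hu : φ u = 0) (hv : φ v = 1) :
    CFSatisfies (cfH φ m) (cfC φ m) s(u, v) := by
  have h20 : ∀ i : Fin 2, i ≠ 1 → i = 0 := by decide
  have hmb0 : ∀ b, φ b = 1 → φ (m b) = 0 := by
    intro b hb
    refine h20 _ fun h1 => ?_
    exact hφ b (m b) (hval b) (hb.trans h1.symm)
  obtain ⟨col0, b, ⟨⟨hb1, hb2⟩, hbc⟩, huniq⟩ := cf_core hval hmin huv hu hv
  refine ⟨col0, s(b, m b), ⟨?_, ?_, ?_⟩, ?_⟩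
  · rw [SimpleGraph.mem_edgeSet]
    exact Or.inl ⟨hb1, hmb0 b hb1, rfl⟩
  · rcases hb2 with hb2 | rfl
    · exact ⟨u, by simp, by rw [Sym2.mem_iff]; exact Or.inr hb2.symm⟩
    · exact ⟨b, by simp, by rw [Sym2.mem_iff]; exact Or.inl rfl⟩
  · rw [cfC_edge hb1 (hmb0 b hb1)]; exact hbc
  · rintro f' ⟨hf'H, hf'touch, hf'c⟩
    induction f' using Sym2.ind with
    | _ x y =>
      rw [SimpleGraph.mem_edgeSet] at hf'H
      obtain ⟨z, hz1, hz2⟩ := hf'touch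
      rw [Sym2.mem_iff] at hz1 hz2
      rcases hf'H with ⟨hx1, hy0, hmx⟩ | ⟨hy1, hx0, hmy⟩
      · -- f' = s(x, m x)
        have hkey : m x = u ∨ x = v := by
          rcases hz1 with h1 | h1 <;> rcases hz2 with h2 | h2
          · have hxu : φ x = 0 := by rw [h2.symm.trans h1]; exact hu
            rw [hx1] at hxu; exact absurd hxu (by decide)
          · exact Or.inl (hmx.trans (h2.symm.trans h1))
          · exact Or.inr (h2.symm.trans h1)
          · have hv0 : φ v = 0 := by rw [← (h2.symm.trans h1)]; exact hy0
            rw [hv] at hv0; exact absurd hv0 (by decide)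
        have hc : cfCol φ m x = col0 := by
          rw [← hmx] at hf'c
          rw [cfC_edge hx1 (hmb0 x hx1)] at hf'c
          exact hf'c
        have hxb : x = b := huniq x ⟨⟨hx1, hkey⟩, hc⟩
        subst hxb
        rw [← hmx]
      · -- f' = s(m y, y)
        have hkey : m y = u ∨ y = v := by
          rcases hz1 with h1 | h1 <;> rcases hz2 with h2 | h2
          · exact Or.inl (hmy.trans (h2.symm.trans h1))
          · have hyu : φ y = 0 := by rw [h2.symm.trans h1]; exact hu
            rw [hy1] at hyu; exact absurd hyu (by decide)
          · have hv0 : φ v = 0 := by rw [← (h2.symm.trans h1)]; exact hx0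
            rw [hv] at hv0; exact absurd hv0 (by decide)
          · exact Or.inr (h2.symm.trans h1)
        have hc : cfCol φ m y = col0 := by
          rw [← hmy, Sym2.eq_swap] at hf'c
          rw [cfC_edge hy1 (hmb0 y hy1)] at hf'c
          exact hf'c
        have hyb : y = b := huniq y ⟨⟨hy1, hkey⟩, hc⟩
        subst hyb
        rw [← hmy, Sym2.eq_swap]

end Aux4

/-- Every finite bipartite simple graph without isolated vertices satisfies `χ'_sCF(G) ≤ 3`. -/
theorem scfChromIndex_bipartite_le_three {V : Type*} [Fintype V] (G : SimpleGraph V)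
    (hBip : G.Colorable 2) (hNoIso : ∀ v : V, ∃ w : V, G.Adj v w) :
    scfChromIndex G ≤ 3 := by
  classical
  obtain ⟨φ0⟩ := hBip
  set φ : V → Fin 2 := ⇑φ0 with hφdef
  have hφ : ∀ x y, G.Adj x y → φ x ≠ φ y := fun x y h => φ0.valid h
  choose m1 hm1 using hNoIso
  letI : LinearOrder V := LinearOrder.lift' (Fintype.equivFin V) (Fintype.equivFin V).injective
  have hne : ({n | ∃ m : V → V, (∀ x, G.Adj x (m x)) ∧ cfNsing φ m = n} : Set ℕ).Nonempty :=
    ⟨_, m1, hm1, rfl⟩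
  obtain ⟨m, hmval, hmn⟩ := Nat.sInf_mem hne
  have hmin : ∀ m' : V → V, (∀ x, G.Adj x (m' x)) → cfNsing φ m ≤ cfNsing φ m' := by
    intro m' h'
    rw [hmn]
    exact Nat.sInf_le ⟨m', h', rfl⟩
  apply Nat.sInf_le
  refine ⟨cfH φ m, ?_, cfC φ m, ?_⟩
  · intro x y h
    rcases h with ⟨-, -, hm⟩ | ⟨-, -, hm⟩
    · exact hm ▸ hmval x
    · exact (hm ▸ hmval y).symm
  · intro e he
    induction e using Sym2.ind with
    | _ x y =>
      rw [SimpleGraph.mem_edgeSet] at he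
      have hxy := hφ x y he
      have h2 : ∀ i : Fin 2, i = 0 ∨ i = 1 := by decide
      rcases h2 (φ x) with hx | hx
      · have hy : φ y = 1 := by
          rcases h2 (φ y) with h | h
          · rw [hx, h] at hxy; exact absurd rfl hxy
          · exact h
        exact cf_bridge hmval hmin hφ he hx hy
      · have hy : φ y = 0 := by
          rcases h2 (φ y) with h | h
          · exact h
          · rw [hx, h] at hxy; exact absurd rfl hxy
        rw [Sym2.eq_swap]
        exact cf_bridge hmval hmin hφ he.symm hy hx
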